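/- In the Poisson empirical Bayes model, define the regularized posterior moment estimator Ê_ρ(θ^k | y) = [y]_k/N^k + (1/N^k)·Δ_Ĝ(y)/max(f_Ĝ(y), ρ), where Δ_G(y) = f_G(y+k)[y+k]_k − f_G(y)[y]_k. Then, with ‖h‖² = Σ_y h(y)² f_G(y), the error satisfies ‖Ê_ρ(θ^k|y) − E(θ^k|y)‖ ≤ (C_{G,ρ}/N^k)(‖(f_Ĝ − f_G)²‖^{1/2} + ‖(f_Ĝ(·+k) − f_G(·+k))²‖^{1/2}) + D_{G,ρ}/N^k, where C_{G,ρ} = ρ^{-2}‖Δ_G²‖^{1/2} + ρ^{-1}‖[y]_k²‖^{1/2} + ρ^{-1}‖[y+k]_k²‖^{1/2} and D_{G,ρ} = ‖(Δ_G(y)/f_G(y))·(1 − f_G(y)/ρ)_+‖. -/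

import Mathlib

open MeasureTheory Real

/-- Error bound for the regularized posterior moment estimator in the Poisson empirical
Bayes model (Lemma "regularized-Poisson").  True prior `G` and estimated prior `Ghat`
have marginal pmfs `f_G`, `f_Ghat`; the true posterior moment is given by Robbins'
formula `E(θ^k|y) = [y]_k/N^k + Δ_G(y)/(N^k f_G(y))` with
`Δ_G(y) = f_G(y+k)[y+k]_k − f_G(y)[y]_k`; the regularized estimator replaces
`f_Ghat(y)` by `max(f_Ghat(y), ρ)`.  With `‖h‖² = Σ_y h(y)² f_G(y)`,
`‖Ê_ρ(θ^k|y) − E(θ^k|y)‖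
   ≤ (C_{G,ρ}/N^k)(‖(f_Ghat − f_G)²‖^{1/2} + ‖(f_Ghat(·+k) − f_G(·+k))²‖^{1/2}) + D_{G,ρ}/N^k`,
with `C_{G,ρ} = ρ⁻²‖Δ_G²‖^{1/2} + ρ⁻¹‖[y]_k²‖^{1/2} + ρ⁻¹‖[y+k]_k²‖^{1/2}` and
`D_{G,ρ} = ‖(Δ_G/f_G)·(1 − f_G/ρ)₊‖`. -/
private lemma summable_add_sq (u v w : ℕ → ℝ) (hw : ∀ y, 0 ≤ w y)
    (hu : Summable fun y => u y ^ 2 * w y) (hv : Summable fun y => v y ^ 2 * w y) :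
    Summable fun y => (u y + v y) ^ 2 * w y := by
  refine Summable.of_nonneg_of_le (fun y => mul_nonneg (sq_nonneg _) (hw y)) (fun y => ?_)
    ((hu.add hv).mul_left 2)
  have h := mul_nonneg (sq_nonneg (u y - v y)) (hw y)
  nlinarith [h]

private lemma summable_cross (u v w : ℕ → ℝ) (hw : ∀ y, 0 ≤ w y)
    (hu0 : ∀ y, 0 ≤ u y) (hv0 : ∀ y, 0 ≤ v y)
    (hu : Summable fun y => u y ^ 2 * w y) (hv : Summable fun y => v y ^ 2 * w y) :
    Summable fun y => u y * v y * w y := by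
  refine Summable.of_nonneg_of_le
    (fun y => mul_nonneg (mul_nonneg (hu0 y) (hv0 y)) (hw y)) (fun y => ?_)
    ((hu.add hv).mul_left (1/2))
  have h := mul_nonneg (sq_nonneg (u y - v y)) (hw y)
  nlinarith [h]

private lemma cs_tsum (u v w : ℕ → ℝ) (hw : ∀ y, 0 ≤ w y)
    (hu0 : ∀ y, 0 ≤ u y) (hv0 : ∀ y, 0 ≤ v y)
    (hu : Summable fun y => u y ^ 2 * w y) (hv : Summable fun y => v y ^ 2 * w y) :
    ∑' y, u y * v y * w y
      ≤ Real.sqrt (∑' y, u y ^ 2 * w y) * Real.sqrt (∑' y, v y ^ 2 * w y) := by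
  have hsumm := summable_cross u v w hw hu0 hv0 hu hv
  refine Summable.tsum_le_of_sum_le hsumm fun s => ?_
  have key : ∑ y ∈ s, u y * v y * w y
      ≤ Real.sqrt (∑ y ∈ s, u y ^ 2 * w y) * Real.sqrt (∑ y ∈ s, v y ^ 2 * w y) := by
    have h := Finset.sum_mul_sq_le_sq_mul_sq s (fun y => u y * Real.sqrt (w y))
      (fun y => v y * Real.sqrt (w y))
    have e1 : ∀ y, u y * Real.sqrt (w y) * (v y * Real.sqrt (w y)) = u y * v y * w y := by
      intro y
      have h0 := Real.mul_self_sqrt (hw y)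
      linear_combination u y * v y * h0
    have e2 : ∀ y, (u y * Real.sqrt (w y)) ^ 2 = u y ^ 2 * w y := by
      intro y
      rw [mul_pow, Real.sq_sqrt (hw y)]
    have e3 : ∀ y, (v y * Real.sqrt (w y)) ^ 2 = v y ^ 2 * w y := by
      intro y
      rw [mul_pow, Real.sq_sqrt (hw y)]
    simp only [e1, e2, e3] at h
    have hnn : 0 ≤ ∑ y ∈ s, u y * v y * w y :=
      Finset.sum_nonneg fun y _ => mul_nonneg (mul_nonneg (hu0 y) (hv0 y)) (hw y)
    calc ∑ y ∈ s, u y * v y * w y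
        = Real.sqrt ((∑ y ∈ s, u y * v y * w y) ^ 2) := (Real.sqrt_sq hnn).symm
      _ ≤ Real.sqrt ((∑ y ∈ s, u y ^ 2 * w y) * ∑ y ∈ s, v y ^ 2 * w y) := Real.sqrt_le_sqrt h
      _ = _ := Real.sqrt_mul (Finset.sum_nonneg fun y _ => mul_nonneg (sq_nonneg _) (hw y)) _
  refine key.trans (mul_le_mul ?_ ?_ (Real.sqrt_nonneg _) (Real.sqrt_nonneg _))
  · exact Real.sqrt_le_sqrt (Summable.sum_le_tsum s (fun y _ => mul_nonneg (sq_nonneg _) (hw y)) hu)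
  · exact Real.sqrt_le_sqrt (Summable.sum_le_tsum s (fun y _ => mul_nonneg (sq_nonneg _) (hw y)) hv)

private lemma mink (u v w : ℕ → ℝ) (hw : ∀ y, 0 ≤ w y)
    (hu0 : ∀ y, 0 ≤ u y) (hv0 : ∀ y, 0 ≤ v y)
    (hu : Summable fun y => u y ^ 2 * w y) (hv : Summable fun y => v y ^ 2 * w y) :
    Real.sqrt (∑' y, (u y + v y) ^ 2 * w y)
      ≤ Real.sqrt (∑' y, u y ^ 2 * w y) + Real.sqrt (∑' y, v y ^ 2 * w y) := by
  have hcross := summable_cross u v w hw hu0 hv0 hu hv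
  have hexp : ∀ y, (u y + v y) ^ 2 * w y
      = u y ^ 2 * w y + (2 * (u y * v y * w y) + v y ^ 2 * w y) := fun y => by ring
  have hsum2 : Summable fun y => 2 * (u y * v y * w y) + v y ^ 2 * w y :=
    (hcross.mul_left 2).add hv
  have e : ∑' y, (u y + v y) ^ 2 * w y
      = (∑' y, u y ^ 2 * w y) + (2 * ∑' y, u y * v y * w y + ∑' y, v y ^ 2 * w y) := by
    rw [tsum_congr hexp, Summable.tsum_add hu hsum2, Summable.tsum_add (hcross.mul_left 2) hv, tsum_mul_left]
  rw [e]
  set A := ∑' y, u y ^ 2 * w y with hA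
  set B := ∑' y, v y ^ 2 * w y with hB
  have hA0 : 0 ≤ A := tsum_nonneg fun y => mul_nonneg (sq_nonneg _) (hw y)
  have hB0 : 0 ≤ B := tsum_nonneg fun y => mul_nonneg (sq_nonneg _) (hw y)
  have hcs := cs_tsum u v w hw hu0 hv0 hu hv
  have h1 : A + (2 * ∑' y, u y * v y * w y + B) ≤ (Real.sqrt A + Real.sqrt B) ^ 2 := by
    have hsA := Real.sq_sqrt hA0
    have hsB := Real.sq_sqrt hB0
    nlinarith [hcs]
  calc Real.sqrt (A + (2 * ∑' y, u y * v y * w y + B))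
      ≤ Real.sqrt ((Real.sqrt A + Real.sqrt B) ^ 2) := Real.sqrt_le_sqrt h1
    _ = Real.sqrt A + Real.sqrt B := Real.sqrt_sq (by positivity)

private lemma mono_nrm (u v w : ℕ → ℝ) (hw : ∀ y, 0 ≤ w y) (h : ∀ y, |u y| ≤ v y)
    (hv : Summable fun y => v y ^ 2 * w y) :
    Real.sqrt (∑' y, u y ^ 2 * w y) ≤ Real.sqrt (∑' y, v y ^ 2 * w y) := by
  have hle : ∀ y, u y ^ 2 * w y ≤ v y ^ 2 * w y := by
    intro y
    have h1 : u y ^ 2 ≤ v y ^ 2 := by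
      have := h y
      nlinarith [abs_nonneg (u y), sq_abs (u y)]
    exact mul_le_mul_of_nonneg_right h1 (hw y)
  have hu : Summable fun y => u y ^ 2 * w y :=
    Summable.of_nonneg_of_le (fun y => mul_nonneg (sq_nonneg _) (hw y)) hle hv
  exact Real.sqrt_le_sqrt (Summable.tsum_le_tsum hle hu hv)

private lemma summable_prod_sq (u v w : ℕ → ℝ) (hw : ∀ y, 0 ≤ w y)
    (hu : Summable fun y => (u y ^ 2) ^ 2 * w y) (hv : Summable fun y => (v y ^ 2) ^ 2 * w y) :
    Summable fun y => (u y * v y) ^ 2 * w y := by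
  refine Summable.of_nonneg_of_le (fun y => mul_nonneg (sq_nonneg _) (hw y)) (fun y => ?_)
    ((hu.add hv).mul_left (1/2))
  nlinarith [mul_nonneg (sq_nonneg (u y ^ 2 - v y ^ 2)) (hw y)]

private lemma prod_nrm (u v w : ℕ → ℝ) (hw : ∀ y, 0 ≤ w y)
    (hu : Summable fun y => (u y ^ 2) ^ 2 * w y) (hv : Summable fun y => (v y ^ 2) ^ 2 * w y) :
    Real.sqrt (∑' y, (u y * v y) ^ 2 * w y)
      ≤ Real.sqrt (Real.sqrt (∑' y, (u y ^ 2) ^ 2 * w y))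
          * Real.sqrt (Real.sqrt (∑' y, (v y ^ 2) ^ 2 * w y)) := by
  have h := cs_tsum (fun y => u y ^ 2) (fun y => v y ^ 2) w hw
    (fun y => sq_nonneg _) (fun y => sq_nonneg _) hu hv
  have h2 : ∑' y, (u y * v y) ^ 2 * w y
      ≤ Real.sqrt (∑' y, (u y ^ 2) ^ 2 * w y) * Real.sqrt (∑' y, (v y ^ 2) ^ 2 * w y) := by
    have e : ∀ y, (u y * v y) ^ 2 * w y = u y ^ 2 * v y ^ 2 * w y := fun y => by ring
    rw [tsum_congr e]
    exact h
  calc Real.sqrt (∑' y, (u y * v y) ^ 2 * w y)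
      ≤ Real.sqrt (Real.sqrt (∑' y, (u y ^ 2) ^ 2 * w y)
          * Real.sqrt (∑' y, (v y ^ 2) ^ 2 * w y)) := Real.sqrt_le_sqrt h2
    _ = _ := Real.sqrt_mul (Real.sqrt_nonneg _) _

set_option maxHeartbeats 1600000 in
theorem regularized_poisson_error_bound
    (N : ℝ) (hN : 0 < N) (k : ℕ) (hk : 1 ≤ k) (ρ : ℝ) (hρ : 0 < ρ)
    (G Ghat : Measure ℝ) [IsProbabilityMeasure G] [IsProbabilityMeasure Ghat]
    (fG fGhat : ℕ → ℝ)
    (hfG : ∀ y : ℕ, fG y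
      = ∫ θ, Real.exp (-(N * θ)) * (N * θ) ^ y / (Nat.factorial y : ℝ) ∂G)
    (hfGhat : ∀ y : ℕ, fGhat y
      = ∫ θ, Real.exp (-(N * θ)) * (N * θ) ^ y / (Nat.factorial y : ℝ) ∂Ghat)
    (hpos : ∀ y : ℕ, 0 < fG y)
    -- abbreviations
    (ΔG ΔGhat : ℕ → ℝ)
    (hΔG : ∀ y : ℕ, ΔG y = fG (y + k) * (Nat.descFactorial (y + k) k : ℝ)
        - fG y * (Nat.descFactorial y k : ℝ))
    (hΔGhat : ∀ y : ℕ, ΔGhat y = fGhat (y + k) * (Nat.descFactorial (y + k) k : ℝ)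
        - fGhat y * (Nat.descFactorial y k : ℝ))
    (nrm : (ℕ → ℝ) → ℝ)
    (hnrm : ∀ h : ℕ → ℝ, nrm h = Real.sqrt (∑' y : ℕ, h y ^ 2 * fG y))
    -- all norms appearing are assumed finite
    (hs1 : Summable fun y : ℕ => ((ΔGhat y / (N ^ k * max (fGhat y) ρ)) - (ΔG y / (N ^ k * fG y))) ^ 2 * fG y)
    (hs2 : Summable fun y : ℕ => ((ΔG y) ^ 2) ^ 2 * fG y)
    (hs3 : Summable fun y : ℕ => ((Nat.descFactorial y k : ℝ) ^ 2) ^ 2 * fG y)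
    (hs4 : Summable fun y : ℕ => ((Nat.descFactorial (y + k) k : ℝ) ^ 2) ^ 2 * fG y)
    (hs5 : Summable fun y : ℕ => ((fGhat y - fG y) ^ 2) ^ 2 * fG y)
    (hs6 : Summable fun y : ℕ => ((fGhat (y + k) - fG (y + k)) ^ 2) ^ 2 * fG y)
    (hs7 : Summable fun y : ℕ => ((ΔG y / fG y) * max (1 - fG y / ρ) 0) ^ 2 * fG y) :
    nrm (fun y =>
        ((Nat.descFactorial y k : ℝ) / N ^ k + ΔGhat y / (N ^ k * max (fGhat y) ρ))
          - ((Nat.descFactorial y k : ℝ) / N ^ k + ΔG y / (N ^ k * fG y)))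
      ≤ (ρ⁻¹ ^ 2 * Real.sqrt (nrm fun y => (ΔG y) ^ 2)
            + ρ⁻¹ * Real.sqrt (nrm fun y => ((Nat.descFactorial y k : ℝ)) ^ 2)
            + ρ⁻¹ * Real.sqrt (nrm fun y => ((Nat.descFactorial (y + k) k : ℝ)) ^ 2))
          / N ^ k
          * (Real.sqrt (nrm fun y => (fGhat y - fG y) ^ 2)
              + Real.sqrt (nrm fun y => (fGhat (y + k) - fG (y + k)) ^ 2))
        + nrm (fun y => (ΔG y / fG y) * max (1 - fG y / ρ) 0) / N ^ k := by

  have hw : ∀ y, 0 ≤ fG y := fun y => (hpos y).le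
  have hNk : (0:ℝ) < N ^ k := pow_pos hN k
  have hNk' : (N:ℝ) ^ k ≠ 0 := ne_of_gt hNk
  -- the functions
  set t : ℕ → ℝ := fun y => ΔGhat y / max (fGhat y) ρ - ΔG y / fG y with htdef
  set b1 : ℕ → ℝ := fun y => ρ⁻¹ ^ 2 * (|ΔG y| * |fGhat y - fG y|) with hb1
  set b2 : ℕ → ℝ := fun y => ρ⁻¹ * ((Nat.descFactorial y k : ℝ) * |fGhat y - fG y|) with hb2
  set b3 : ℕ → ℝ := fun y =>
    ρ⁻¹ * ((Nat.descFactorial (y + k) k : ℝ) * |fGhat (y + k) - fG (y + k)|) with hb3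
  set b4 : ℕ → ℝ := fun y => |ΔG y / fG y| * max (1 - fG y / ρ) 0 with hb4
  have hb10 : ∀ y, 0 ≤ b1 y := fun y => by
    simp only [hb1]; positivity
  have hb20 : ∀ y, 0 ≤ b2 y := fun y => by
    simp only [hb2]; positivity
  have hb30 : ∀ y, 0 ≤ b3 y := fun y => by
    simp only [hb3]; positivity
  have hb40 : ∀ y, 0 ≤ b4 y := fun y =>
    mul_nonneg (abs_nonneg _) (le_max_right _ _)
  -- pointwise bound
  have hpt : ∀ y, |t y| ≤ b1 y + (b2 y + (b3 y + b4 y)) := by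
    intro y
    have hf : 0 < fG y := hpos y
    have hf' : 0 < fG (y + k) := hpos (y + k)
    have hm : (0:ℝ) < max (fGhat y) ρ := lt_of_lt_of_le hρ (le_max_right _ _)
    have hmG : (0:ℝ) < max (fG y) ρ := lt_of_lt_of_le hρ (le_max_right _ _)
    have hdec : t y = (ΔGhat y - ΔG y) / max (fGhat y) ρ
        + ΔG y * (max (fG y) ρ - max (fGhat y) ρ) / (max (fGhat y) ρ * max (fG y) ρ)
        + ΔG y * (fG y - max (fG y) ρ) / (max (fG y) ρ * fG y) := by
      simp only [htdef]
      field_simp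
      ring
    have habs : |t y| ≤ |(ΔGhat y - ΔG y) / max (fGhat y) ρ|
        + |ΔG y * (max (fG y) ρ - max (fGhat y) ρ) / (max (fGhat y) ρ * max (fG y) ρ)|
        + |ΔG y * (fG y - max (fG y) ρ) / (max (fG y) ρ * fG y)| := by
      rw [hdec]
      exact (abs_add_le _ _).trans (add_le_add_left (abs_add_le _ _) _)
    have hA : |(ΔGhat y - ΔG y) / max (fGhat y) ρ| ≤ b2 y + b3 y := by
      have hnum : |ΔGhat y - ΔG y|
          ≤ (Nat.descFactorial (y + k) k : ℝ) * |fGhat (y + k) - fG (y + k)|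
            + (Nat.descFactorial y k : ℝ) * |fGhat y - fG y| := by
        have he : ΔGhat y - ΔG y
            = (fGhat (y + k) - fG (y + k)) * (Nat.descFactorial (y + k) k : ℝ)
              - (fGhat y - fG y) * (Nat.descFactorial y k : ℝ) := by
          rw [hΔG, hΔGhat]; ring
        rw [he]
        refine (abs_sub _ _).trans (le_of_eq ?_)
        rw [abs_mul, abs_mul, Nat.abs_cast, Nat.abs_cast]
        ring
      rw [abs_div, abs_of_pos hm]
      calc |ΔGhat y - ΔG y| / max (fGhat y) ρ
          ≤ ((Nat.descFactorial (y + k) k : ℝ) * |fGhat (y + k) - fG (y + k)|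
              + (Nat.descFactorial y k : ℝ) * |fGhat y - fG y|) / ρ := by
            apply div_le_div₀ (by positivity) hnum hρ (le_max_right _ _)
        _ = b2 y + b3 y := by
            simp only [hb2, hb3, div_eq_inv_mul]; ring
    have hB : |ΔG y * (max (fG y) ρ - max (fGhat y) ρ) / (max (fGhat y) ρ * max (fG y) ρ)|
        ≤ b1 y := by
      have hnum : |ΔG y * (max (fG y) ρ - max (fGhat y) ρ)|
          ≤ |ΔG y| * |fGhat y - fG y| := by
        rw [abs_mul]
        refine mul_le_mul_of_nonneg_left ?_ (abs_nonneg _)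
        calc |max (fG y) ρ - max (fGhat y) ρ| ≤ |fG y - fGhat y| :=
              abs_max_sub_max_le_abs _ _ _
          _ = |fGhat y - fG y| := abs_sub_comm _ _
      rw [abs_div, abs_of_pos (mul_pos hm hmG)]
      calc |ΔG y * (max (fG y) ρ - max (fGhat y) ρ)| / (max (fGhat y) ρ * max (fG y) ρ)
          ≤ (|ΔG y| * |fGhat y - fG y|) / (ρ * ρ) :=
            div_le_div₀ (by positivity) hnum (by positivity)
              (mul_le_mul (le_max_right _ _) (le_max_right _ _) hρ.le hm.le)
        _ = b1 y := by
            simp only [hb1, div_eq_inv_mul, mul_inv]; ring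
    have hC : |ΔG y * (fG y - max (fG y) ρ) / (max (fG y) ρ * fG y)| ≤ b4 y := by
      rcases le_total ρ (fG y) with h | h
      · rw [max_eq_left h]
        simp only [sub_self, mul_zero, zero_div, abs_zero]
        exact hb40 y
      · rw [max_eq_right h]
        have hmax : max (1 - fG y / ρ) 0 = 1 - fG y / ρ := by
          apply max_eq_left
          have : fG y / ρ ≤ 1 := (div_le_one hρ).mpr h
          linarith
        have : |ΔG y * (fG y - ρ) / (ρ * fG y)| = |ΔG y| * (ρ - fG y) / (ρ * fG y) := by
          rw [abs_div, abs_of_pos (mul_pos hρ hf), abs_mul,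
            abs_of_nonpos (by linarith : fG y - ρ ≤ 0)]
          ring_nf
        rw [this]
        simp only [hb4, hmax, abs_div, abs_of_pos hf]
        apply le_of_eq
        rw [div_mul_eq_mul_div, div_eq_div_iff (by positivity) (by positivity)]
        field_simp
    calc |t y| ≤ _ := habs
      _ ≤ b2 y + b3 y + b1 y + b4 y := by
          apply add_le_add (add_le_add hA hB) hC
      _ = b1 y + (b2 y + (b3 y + b4 y)) := by ring
  -- summability of the pieces
  have SB1 : Summable fun y => b1 y ^ 2 * fG y := by
    refine ((summable_prod_sq ΔG (fun y => fGhat y - fG y) fG hw hs2 hs5).mul_left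
      ((ρ⁻¹ ^ 2) ^ 2)).congr fun y => ?_
    simp only [hb1, mul_pow, sq_abs]
    ring
  have SB2 : Summable fun y => b2 y ^ 2 * fG y := by
    refine ((summable_prod_sq (fun y => (Nat.descFactorial y k : ℝ))
      (fun y => fGhat y - fG y) fG hw hs3 hs5).mul_left ((ρ⁻¹) ^ 2)).congr fun y => ?_
    simp only [hb2, mul_pow, sq_abs]
    ring
  have SB3 : Summable fun y => b3 y ^ 2 * fG y := by
    refine ((summable_prod_sq (fun y => (Nat.descFactorial (y + k) k : ℝ))
      (fun y => fGhat (y + k) - fG (y + k)) fG hw hs4 hs6).mul_left ((ρ⁻¹) ^ 2)).congr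
      fun y => ?_
    simp only [hb3, mul_pow, sq_abs]
    ring
  have SB4 : Summable fun y => b4 y ^ 2 * fG y := by
    refine hs7.congr fun y => ?_
    simp only [hb4, mul_pow, sq_abs]
  have SB34 : Summable fun y => (b3 y + b4 y) ^ 2 * fG y :=
    summable_add_sq _ _ _ hw SB3 SB4
  have SB234 : Summable fun y => (b2 y + (b3 y + b4 y)) ^ 2 * fG y :=
    summable_add_sq _ _ _ hw SB2 SB34
  -- reduce LHS
  rw [hnrm]
  have hfun : ∀ y, (((Nat.descFactorial y k : ℝ) / N ^ k + ΔGhat y / (N ^ k * max (fGhat y) ρ))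
      - ((Nat.descFactorial y k : ℝ) / N ^ k + ΔG y / (N ^ k * fG y))) ^ 2 * fG y
      = ((N ^ k : ℝ)⁻¹) ^ 2 * (t y ^ 2 * fG y) := by
    intro y
    have hf : fG y ≠ 0 := ne_of_gt (hpos y)
    have hm : (max (fGhat y) ρ) ≠ 0 := ne_of_gt (lt_of_lt_of_le hρ (le_max_right _ _))
    have h1 : ((Nat.descFactorial y k : ℝ) / N ^ k + ΔGhat y / (N ^ k * max (fGhat y) ρ))
        - ((Nat.descFactorial y k : ℝ) / N ^ k + ΔG y / (N ^ k * fG y))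
        = (N ^ k : ℝ)⁻¹ * t y := by
      simp only [htdef]
      field_simp
      ring
    rw [h1]
    ring
  rw [tsum_congr hfun, tsum_mul_left, Real.sqrt_mul (sq_nonneg _),
    Real.sqrt_sq (inv_nonneg.mpr hNk.le)]
  -- the main chain for sqrt(∑ t² w)
  have hT : Real.sqrt (∑' y, t y ^ 2 * fG y)
      ≤ Real.sqrt (∑' y, b1 y ^ 2 * fG y) + (Real.sqrt (∑' y, b2 y ^ 2 * fG y)
        + (Real.sqrt (∑' y, b3 y ^ 2 * fG y) + Real.sqrt (∑' y, b4 y ^ 2 * fG y))) := by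
    calc Real.sqrt (∑' y, t y ^ 2 * fG y)
        ≤ Real.sqrt (∑' y, (b1 y + (b2 y + (b3 y + b4 y))) ^ 2 * fG y) :=
          mono_nrm t _ fG hw hpt (summable_add_sq _ _ _ hw SB1 SB234)
      _ ≤ Real.sqrt (∑' y, b1 y ^ 2 * fG y)
            + Real.sqrt (∑' y, (b2 y + (b3 y + b4 y)) ^ 2 * fG y) :=
          mink _ _ _ hw hb10 (fun y => add_nonneg (hb20 y) (add_nonneg (hb30 y) (hb40 y)))
            SB1 SB234
      _ ≤ Real.sqrt (∑' y, b1 y ^ 2 * fG y) + (Real.sqrt (∑' y, b2 y ^ 2 * fG y)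
            + Real.sqrt (∑' y, (b3 y + b4 y) ^ 2 * fG y)) := by
          gcongr
          exact mink _ _ _ hw hb20 (fun y => add_nonneg (hb30 y) (hb40 y)) SB2 SB34
      _ ≤ _ := by
          gcongr
          exact mink _ _ _ hw hb30 hb40 SB3 SB4
  -- bound each piece
  have hB1 : Real.sqrt (∑' y, b1 y ^ 2 * fG y)
      ≤ ρ⁻¹ ^ 2 * (Real.sqrt (Real.sqrt (∑' y, ((ΔG y) ^ 2) ^ 2 * fG y))
        * Real.sqrt (Real.sqrt (∑' y, ((fGhat y - fG y) ^ 2) ^ 2 * fG y))) := by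
    have e : ∀ y, b1 y ^ 2 * fG y
        = (ρ⁻¹ ^ 2) ^ 2 * ((ΔG y * (fGhat y - fG y)) ^ 2 * fG y) := by
      intro y
      simp only [hb1, mul_pow, sq_abs]
      ring
    rw [tsum_congr e, tsum_mul_left, Real.sqrt_mul (sq_nonneg _),
      Real.sqrt_sq (by positivity)]
    exact mul_le_mul_of_nonneg_left
      (prod_nrm ΔG (fun y => fGhat y - fG y) fG hw hs2 hs5) (by positivity)
  have hB2 : Real.sqrt (∑' y, b2 y ^ 2 * fG y)
      ≤ ρ⁻¹ * (Real.sqrt (Real.sqrt (∑' y, ((Nat.descFactorial y k : ℝ) ^ 2) ^ 2 * fG y))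
        * Real.sqrt (Real.sqrt (∑' y, ((fGhat y - fG y) ^ 2) ^ 2 * fG y))) := by
    have e : ∀ y, b2 y ^ 2 * fG y
        = (ρ⁻¹) ^ 2 * (((Nat.descFactorial y k : ℝ) * (fGhat y - fG y)) ^ 2 * fG y) := by
      intro y
      simp only [hb2, mul_pow, sq_abs]
      ring
    rw [tsum_congr e, tsum_mul_left, Real.sqrt_mul (sq_nonneg _),
      Real.sqrt_sq (by positivity)]
    exact mul_le_mul_of_nonneg_left
      (prod_nrm _ (fun y => fGhat y - fG y) fG hw hs3 hs5) (by positivity)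
  have hB3 : Real.sqrt (∑' y, b3 y ^ 2 * fG y)
      ≤ ρ⁻¹ * (Real.sqrt (Real.sqrt (∑' y, ((Nat.descFactorial (y + k) k : ℝ) ^ 2) ^ 2 * fG y))
        * Real.sqrt (Real.sqrt (∑' y, ((fGhat (y + k) - fG (y + k)) ^ 2) ^ 2 * fG y))) := by
    have e : ∀ y, b3 y ^ 2 * fG y
        = (ρ⁻¹) ^ 2 * (((Nat.descFactorial (y + k) k : ℝ)
            * (fGhat (y + k) - fG (y + k))) ^ 2 * fG y) := by
      intro y
      simp only [hb3, mul_pow, sq_abs]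
      ring
    rw [tsum_congr e, tsum_mul_left, Real.sqrt_mul (sq_nonneg _),
      Real.sqrt_sq (by positivity)]
    exact mul_le_mul_of_nonneg_left
      (prod_nrm _ (fun y => fGhat (y + k) - fG (y + k)) fG hw hs4 hs6) (by positivity)
  have hB4 : Real.sqrt (∑' y, b4 y ^ 2 * fG y)
      = Real.sqrt (∑' y, ((ΔG y / fG y) * max (1 - fG y / ρ) 0) ^ 2 * fG y) := by
    congr 1
    refine tsum_congr fun y => ?_
    simp only [hb4, mul_pow, sq_abs]
  -- assemble
  rw [hnrm, hnrm, hnrm, hnrm, hnrm, hnrm]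
  set a1 := Real.sqrt (Real.sqrt (∑' y, ((ΔG y) ^ 2) ^ 2 * fG y)) with ha1
  set a2 := Real.sqrt (Real.sqrt (∑' y, ((Nat.descFactorial y k : ℝ) ^ 2) ^ 2 * fG y)) with ha2
  set a3 := Real.sqrt (Real.sqrt (∑' y, ((Nat.descFactorial (y + k) k : ℝ) ^ 2) ^ 2 * fG y))
    with ha3
  set s1 := Real.sqrt (Real.sqrt (∑' y, ((fGhat y - fG y) ^ 2) ^ 2 * fG y)) with hsd1
  set s2 := Real.sqrt (Real.sqrt (∑' y, ((fGhat (y + k) - fG (y + k)) ^ 2) ^ 2 * fG y)) with hsd2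
  set D := Real.sqrt (∑' y, ((ΔG y / fG y) * max (1 - fG y / ρ) 0) ^ 2 * fG y) with hD
  have hT2 : Real.sqrt (∑' y, t y ^ 2 * fG y)
      ≤ ρ⁻¹ ^ 2 * (a1 * s1) + (ρ⁻¹ * (a2 * s1) + (ρ⁻¹ * (a3 * s2) + D)) := by
    exact hT.trans (add_le_add hB1 (add_le_add hB2 (add_le_add hB3 (le_of_eq hB4))))
  have hfinal : Real.sqrt (∑' y, t y ^ 2 * fG y)
      ≤ (ρ⁻¹ ^ 2 * a1 + ρ⁻¹ * a2 + ρ⁻¹ * a3) * (s1 + s2) + D := by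
    refine hT2.trans ?_
    have h1 : 0 ≤ ρ⁻¹ ^ 2 * (a1 * s2) := by positivity
    have h2 : 0 ≤ ρ⁻¹ * (a2 * s2) := by positivity
    have h3 : 0 ≤ ρ⁻¹ * (a3 * s1) := by positivity
    nlinarith [h1, h2, h3]
  calc (N ^ k : ℝ)⁻¹ * Real.sqrt (∑' y, t y ^ 2 * fG y)
      ≤ (N ^ k : ℝ)⁻¹ * ((ρ⁻¹ ^ 2 * a1 + ρ⁻¹ * a2 + ρ⁻¹ * a3) * (s1 + s2) + D) :=
        mul_le_mul_of_nonneg_left hfinal (inv_nonneg.mpr hNk.le)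
    _ = (ρ⁻¹ ^ 2 * a1 + ρ⁻¹ * a2 + ρ⁻¹ * a3) / N ^ k * (s1 + s2) + D / N ^ k := by
        rw [div_eq_mul_inv, div_eq_mul_inv]
        ring
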